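/- The truncated sl₂ projector satisfies the recursion e·p_m(s) = (q^{−h−2}[s−1]_q/[h+s−1]_q)·p_{m−1}(s−1)·e + f^m e^{m+1} (−1)^m q^{m(s−1)}/([m]_q! ∏_{i=1}^m [h+s+i]_q), as operators on any U_q(sl₂)-module weight space where all Cartan denominators are invertible. -/

import Mathlib

/-- `[z]_q = (q^z - q^{-z})/(q - q⁻¹)` with `q^z := exp(z log q)`. -/
noncomputable def qnum (q z : ℂ) : ℂ :=
  (Complex.exp (z * Complex.log q) - Complex.exp (-z * Complex.log q)) / (q - q⁻¹)

/-- `q^z := exp(z log q)`. -/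
noncomputable def qpow (q z : ℂ) : ℂ := Complex.exp (z * Complex.log q)

/-- The truncated shifted extremal projector
`p_m(s) = Σ_{k=0}^m f^k e^k (-1)^k q^{k(s-1)}/([k]_q! ∏_{i=1}^k [h+s+i]_q)`
applied to a vector of `h`-eigenvalue `b`. -/
noncomputable def truncProj (q : ℂ) {M : Type*} [AddCommGroup M] [Module ℂ M]
    (E F : Module.End ℂ M) (m : ℕ) (s b : ℂ) (w : M) : M :=
  ∑ k ∈ Finset.range (m + 1),
    (((-1 : ℂ) ^ k * qpow q (k * (s - 1))) /
        ((∏ i ∈ Finset.Icc 1 k, qnum q i) *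
         (∏ i ∈ Finset.Icc 1 k, qnum q (b + s + i)))) •
      ((F ^ k) ((E ^ k) w))

namespace TruncAux

/-- The scalar `[k]_q [c-k+1]_q`-type commutator coefficient, with `t = q^c`. -/
noncomputable def CC (q : ℂ) (k : ℕ) (t : ℂ) : ℂ :=
  ((q ^ k - q⁻¹ ^ k) * (q * t * q⁻¹ ^ k - q⁻¹ * t⁻¹ * q ^ k)) / (q - q⁻¹) ^ 2

variable (q : ℂ)

lemma qpow_ne_zero (z : ℂ) : qpow q z ≠ 0 := Complex.exp_ne_zero _
lemma qpow_add (x y : ℂ) : qpow q (x + y) = qpow q x * qpow q y := by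
  simp [qpow, add_mul, Complex.exp_add]
lemma qpow_neg (x : ℂ) : qpow q (-x) = (qpow q x)⁻¹ := by
  simp [qpow, neg_mul, Complex.exp_neg]
lemma qpow_nat_mul (k : ℕ) (z : ℂ) : qpow q (k * z) = (qpow q z) ^ k := by
  rw [qpow, qpow, mul_assoc]; exact Complex.exp_nat_mul _ k
lemma qpow_one (hq0 : q ≠ 0) : qpow q 1 = q := by
  simp [qpow, Complex.exp_log hq0]
lemma qpow_natCast (hq0 : q ≠ 0) (n : ℕ) : qpow q (n : ℂ) = q ^ n := by
  rw [show ((n : ℂ)) = (n : ℂ) * 1 by ring, qpow_nat_mul, qpow_one q hq0]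
lemma qnum_eq (z : ℂ) : qnum q z = (qpow q z - (qpow q z)⁻¹) / (q - q⁻¹) := by
  simp [qnum, qpow, neg_mul, Complex.exp_neg]

lemma sub_inv_ne_zero (hq0 : q ≠ 0) (hq : ∀ n : ℕ, 0 < n → q ^ n ≠ 1) :
    q - q⁻¹ ≠ 0 := by
  intro h
  apply hq 2 (by norm_num)
  have h2 : q * (q - q⁻¹) = q ^ 2 - 1 := by field_simp
  rw [h, mul_zero] at h2
  linear_combination -h2

lemma qnum_nat_ne_zero (hq0 : q ≠ 0) (hq : ∀ n : ℕ, 0 < n → q ^ n ≠ 1)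
    (i : ℕ) (hi : 0 < i) : qnum q (i : ℂ) ≠ 0 := by
  rw [qnum_eq, qpow_natCast q hq0]
  have h2i := hq (2 * i) (by positivity)
  have hqi : q ^ i ≠ 0 := pow_ne_zero _ hq0
  have hsub := sub_inv_ne_zero q hq0 hq
  intro h
  rw [div_eq_zero_iff] at h
  obtain h | h := h
  · apply h2i
    have hx : q ^ i = (q ^ i)⁻¹ := by linear_combination h
    have h2 : q ^ (2 * i) = q ^ i * q ^ i := by rw [two_mul, pow_add]
    rw [h2]
    nth_rewrite 2 [hx]
    exact mul_inv_cancel₀ hqi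
  · exact hsub h

/-- Core `q`-number identity `[a+s+j+1] - q^{s-1}[a+j+2] = q^{-a-j-2}[s-1]`
in exponential-free form; a pure ring identity. -/
lemma core_id (u A P : ℂ) :
    (A * P * u * q ^ 2 - (A * P * u * q ^ 2)⁻¹) / (q - q⁻¹)
        - P * ((u * q ^ 2 * A - (u * q ^ 2 * A)⁻¹) / (q - q⁻¹))
      = u⁻¹ * A⁻¹ * q⁻¹ * q⁻¹ * ((P - P⁻¹) / (q - q⁻¹)) := by
  rw [← mul_div_assoc, div_sub_div_same, ← mul_div_assoc]
  exact congrArg (fun z => z / (q - q⁻¹)) (by ring)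

lemma CCfact (u1 A : ℂ) (hu1 : u1 ≠ 0) :
    ((u1 - u1⁻¹) * (q * (u1 ^ 2 * A) * u1⁻¹ - q⁻¹ * (u1 ^ 2 * A)⁻¹ * u1)) / (q - q⁻¹) ^ 2
      = ((u1 - u1⁻¹) / (q - q⁻¹)) * ((u1 * q * A - (u1 * q * A)⁻¹) / (q - q⁻¹)) := by
  rw [div_mul_div_comm, ← sq]
  refine congrArg (fun z => z / (q - q⁻¹) ^ 2) ?_
  have hu' : u1 * u1⁻¹ = 1 := mul_inv_cancel₀ hu1
  linear_combination ((-1) * A * q * u1 * u1⁻¹ + A * q * u1 ^ 2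
    + (-1) * A⁻¹ * q⁻¹ * u1 * u1⁻¹ + A⁻¹ * q⁻¹ * u1⁻¹ ^ 2) * hu'

lemma CC_factor (j : ℕ) (A : ℂ) (hq0 : q ≠ 0) :
    CC q (j + 1) ((q ^ 2) ^ (j + 1) * A)
      = ((q ^ (j + 1) - (q ^ (j + 1))⁻¹) / (q - q⁻¹))
          * ((q ^ j * q ^ 2 * A - (q ^ j * q ^ 2 * A)⁻¹) / (q - q⁻¹)) := by
  have h1 : ((q ^ 2) ^ (j + 1) : ℂ) = (q ^ (j + 1)) ^ 2 := by
    rw [← pow_mul, ← pow_mul, mul_comm 2 (j + 1)]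
  have h2 : (q ^ j * q ^ 2 * A : ℂ) = q ^ (j + 1) * q * A := by
    rw [pow_succ]; ring
  rw [CC, inv_pow, h1, h2]
  exact CCfact q (q ^ (j + 1)) A (pow_ne_zero _ hq0)

lemma layer1 (e V P M N GG H1 Ps A q u f g g' : ℂ)
    (hN : N ≠ 0) (hGG : GG ≠ 0) (hH1 : H1 ≠ 0) (hf : f ≠ 0) (hg : g ≠ 0)
    (hcore : GG - P * M = u⁻¹ * A⁻¹ * q⁻¹ * q⁻¹ * Ps)
    (hshift : H1 * g' = g * GG) :
    e * V / (f * g) + -(e * (V * P)) / ((f * N) * (g * GG)) * (N * M)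
      = (A * q ^ 2)⁻¹ * Ps / H1 * (e * (V * u⁻¹) / (f * g')) := by
  have hg' : g' ≠ 0 := by
    intro h; rw [h, mul_zero] at hshift
    exact (mul_ne_zero hg hGG) hshift.symm
  have hf1 : f * f⁻¹ = 1 := mul_inv_cancel₀ hf
  have hH11 : H1 * H1⁻¹ = 1 := mul_inv_cancel₀ hH1
  have hg1 : g' * g'⁻¹ = 1 := mul_inv_cancel₀ hg'
  field_simp
  linear_combination (e*V*H1*g') * hcore + (e*V*u⁻¹*A⁻¹*q⁻¹*q⁻¹*Ps) * hshift

lemma prod_shift (x : ℂ) : ∀ j : ℕ,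
    qnum q (x + 1) * (∏ i ∈ Finset.Icc 1 j, qnum q (x + 1 + i))
      = (∏ i ∈ Finset.Icc 1 j, qnum q (x + i)) * qnum q (x + ((j + 1 : ℕ) : ℂ))
  | 0 => by simp
  | (j + 1) => by
    rw [Finset.prod_Icc_succ_top (Nat.le_add_left 1 j),
        Finset.prod_Icc_succ_top (Nat.le_add_left 1 j), ← mul_assoc,
        prod_shift x j, mul_assoc, mul_assoc]
    refine congrArg _ ?_
    rw [show x + 1 + ((j + 1 : ℕ) : ℂ) = x + ((j + 1 + 1 : ℕ) : ℂ) by push_cast; ring]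

lemma scalar_key (a s : ℂ) (j : ℕ) (hq0 : q ≠ 0)
    (hq : ∀ n : ℕ, 0 < n → q ^ n ≠ 1)
    (hg : (∏ i ∈ Finset.Icc 1 j, qnum q (a + s + i)) ≠ 0)
    (hGG : qnum q (a + s + ((j + 1 : ℕ) : ℂ)) ≠ 0)
    (hH1 : qnum q (a + s + 1) ≠ 0) :
    ((-1 : ℂ) ^ j * qpow q (j * (s - 1))) /
        ((∏ i ∈ Finset.Icc 1 j, qnum q i) * (∏ i ∈ Finset.Icc 1 j, qnum q (a + s + i)))
      + ((-1 : ℂ) ^ (j + 1) * qpow q ((j + 1 : ℕ) * (s - 1))) /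
          ((∏ i ∈ Finset.Icc 1 (j + 1), qnum q i) *
           (∏ i ∈ Finset.Icc 1 (j + 1), qnum q (a + s + i)))
          * CC q (j + 1) ((q ^ 2) ^ (j + 1) * qpow q a)
      = (qpow q (-a - 2) * qnum q (s - 1) / qnum q (a + s + 1)) *
          (((-1 : ℂ) ^ j * qpow q (j * ((s - 1) - 1))) /
            ((∏ i ∈ Finset.Icc 1 j, qnum q i) *
             (∏ i ∈ Finset.Icc 1 j, qnum q ((a + 2) + (s - 1) + i)))) := by
  have hqq := sub_inv_ne_zero q hq0 hq
  have hA : qpow q a ≠ 0 := qpow_ne_zero q a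
  have hu : (q ^ j : ℂ) ≠ 0 := pow_ne_zero _ hq0
  have hf : (∏ i ∈ Finset.Icc 1 j, qnum q (i : ℂ)) ≠ 0 :=
    Finset.prod_ne_zero_iff.mpr fun i hi =>
      qnum_nat_ne_zero q hq0 hq i (Finset.mem_Icc.mp hi).1
  have hN : qnum q ((j + 1 : ℕ) : ℂ) ≠ 0 :=
    qnum_nat_ne_zero q hq0 hq (j + 1) (Nat.succ_pos j)
  have hg'eq : (∏ i ∈ Finset.Icc 1 j, qnum q ((a + 2) + (s - 1) + i))
      = ∏ i ∈ Finset.Icc 1 j, qnum q (a + s + 1 + i) :=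
    Finset.prod_congr rfl fun i _ => congrArg (qnum q) (by ring)
  have e1 : qpow q (j * (s - 1)) = (qpow q (s - 1)) ^ j := qpow_nat_mul q j _
  have e2 : ((-1 : ℂ)) ^ (j + 1) * qpow q ((j + 1 : ℕ) * (s - 1))
      = -(((-1 : ℂ)) ^ j * ((qpow q (s - 1)) ^ j * qpow q (s - 1))) := by
    rw [qpow_nat_mul, pow_succ, pow_succ]; ring
  have e3 : qpow q (j * ((s - 1) - 1)) = (qpow q (s - 1)) ^ j * ((q ^ j)⁻¹) := by
    rw [qpow_nat_mul, show (s - 1) - 1 = (s - 1) + (-1) by ring, qpow_add, qpow_neg,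
      qpow_one q hq0, mul_pow, inv_pow]
  have e4 : qpow q (-a - 2) = (qpow q a * q ^ 2)⁻¹ := by
    rw [show -a - 2 = -(a + 2) by ring, qpow_neg, qpow_add,
      show (2 : ℂ) = ((2 : ℕ) : ℂ) by norm_num, qpow_natCast q hq0]
  have e6 : qnum q ((j + 1 : ℕ) : ℂ) = (q ^ (j + 1) - (q ^ (j + 1))⁻¹) / (q - q⁻¹) := by
    rw [qnum_eq, qpow_natCast q hq0]
  have e7 : qpow q (a + s + ((j + 1 : ℕ) : ℂ))
      = qpow q a * qpow q (s - 1) * q ^ j * q ^ 2 := by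
    rw [show a + s + ((j + 1 : ℕ) : ℂ) = a + ((s - 1) + ((j + 2 : ℕ) : ℂ)) by push_cast; ring,
      qpow_add, qpow_add, qpow_natCast q hq0, pow_add]
    ring
  have hcore : qnum q (a + s + ((j + 1 : ℕ) : ℂ))
        - qpow q (s - 1) *
            ((q ^ j * q ^ 2 * qpow q a - (q ^ j * q ^ 2 * qpow q a)⁻¹) / (q - q⁻¹))
      = (q ^ j)⁻¹ * (qpow q a)⁻¹ * q⁻¹ * q⁻¹ * qnum q (s - 1) := by
    rw [qnum_eq q (a + s + _), e7, qnum_eq q (s - 1)]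
    exact core_id q (q ^ j) (qpow q a) (qpow q (s - 1))
  have hshift := prod_shift q (a + s) j
  rw [Finset.prod_Icc_succ_top (Nat.le_add_left 1 j),
      Finset.prod_Icc_succ_top (Nat.le_add_left 1 j), hg'eq, e1, e2, e3, e4,
      CC_factor q j (qpow q a) hq0, ← e6]
  exact layer1 ((-1 : ℂ) ^ j) ((qpow q (s - 1)) ^ j) (qpow q (s - 1))
    ((q ^ j * q ^ 2 * qpow q a - (q ^ j * q ^ 2 * qpow q a)⁻¹) / (q - q⁻¹))
    (qnum q ((j + 1 : ℕ) : ℂ)) (qnum q (a + s + ((j + 1 : ℕ) : ℂ))) (qnum q (a + s + 1))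
    (qnum q (s - 1)) (qpow q a) q (q ^ j)
    (∏ i ∈ Finset.Icc 1 j, qnum q (i : ℂ)) (∏ i ∈ Finset.Icc 1 j, qnum q (a + s + i))
    (∏ i ∈ Finset.Icc 1 j, qnum q (a + s + 1 + i))
    hN hGG hH1 hf hg hcore hshift

lemma ccrec_key (Y t : ℂ) (hY : Y ≠ 0) (hq0 : q ≠ 0) :
    (Y * q - (Y * q)⁻¹) * (q * t * (Y * q)⁻¹ - q⁻¹ * t⁻¹ * (Y * q))
      = (Y - Y⁻¹) * (q * ((q ^ 2)⁻¹ * t) * Y⁻¹ - q⁻¹ * (q ^ 2 * t⁻¹) * Y)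
        + (t - t⁻¹) * (q - q⁻¹) := by
  have hY' : Y * Y⁻¹ = 1 := mul_inv_cancel₀ hY
  have hq' : q * q⁻¹ = 1 := mul_inv_cancel₀ hq0
  linear_combination ((-1) * q * q⁻¹ ^ 2 * t + q * q⁻¹ ^ 2 * t⁻¹ + q ^ 2 * q⁻¹ * t
      + (-1) * q ^ 2 * q⁻¹ * t⁻¹) * hY'
    + (q * t + (-1) * q * t⁻¹ + (-1) * q⁻¹ * t + q⁻¹ * t⁻¹) * hq'

lemma CC_one (t : ℂ) (hq0 : q ≠ 0) (hqq : q - q⁻¹ ≠ 0) :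
    CC q 1 t = (t - t⁻¹) / (q - q⁻¹) := by
  unfold CC
  rw [pow_one, pow_one]
  rw [show (t - t⁻¹) / (q - q⁻¹) = ((t - t⁻¹) * (q - q⁻¹)) / (q - q⁻¹) ^ 2 by
    rw [sq, ← mul_div_mul_right _ _ hqq]]
  refine congrArg (fun z => z / (q - q⁻¹) ^ 2) ?_
  have hq' : q * q⁻¹ = 1 := mul_inv_cancel₀ hq0
  linear_combination ((q - q⁻¹) * (t - t⁻¹)) * hq'

lemma CC_rec (t : ℂ) (hq0 : q ≠ 0) (ht : t ≠ 0) (hqq : q - q⁻¹ ≠ 0) (k : ℕ) :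
    CC q (k + 2) t = CC q (k + 1) (q⁻¹ ^ 2 * t) + (t - t⁻¹) / (q - q⁻¹) := by
  unfold CC
  simp only [mul_inv, inv_pow, inv_inv]
  rw [pow_succ q (k + 1)]
  rw [show (t - t⁻¹) / (q - q⁻¹) = ((t - t⁻¹) * (q - q⁻¹)) / (q - q⁻¹) ^ 2 by
    rw [sq, ← mul_div_mul_right _ _ hqq]]
  rw [← add_div]
  exact congrArg (fun z => z / (q - q⁻¹) ^ 2)
    (ccrec_key q (q ^ (k + 1)) t (pow_ne_zero _ hq0) hq0)

variable {M : Type*} [AddCommGroup M] [Module ℂ M]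

lemma eigen_shift (E K K' : Module.End ℂ M) (hq0 : q ≠ 0)
    (hKE : K * E = (q ^ 2) • (E * K)) (hEK' : E * K' = (q ^ 2) • (K' * E)) :
    ∀ (k : ℕ) (w : M) (A : ℂ), A ≠ 0 → K w = A • w → K' w = A⁻¹ • w →
      K ((E ^ k) w) = ((q ^ 2) ^ k * A) • (E ^ k) w
        ∧ K' ((E ^ k) w) = ((q ^ 2) ^ k * A)⁻¹ • (E ^ k) w := by
  intro k
  induction k with
  | zero =>
    intro w A hA h1 h2
    simpa using ⟨h1, h2⟩
  | succ k ih =>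
    intro w A hA h1 h2
    have hq2 : (q ^ 2 : ℂ) ≠ 0 := pow_ne_zero _ hq0
    have hK1 : K (E w) = (q ^ 2 * A) • (E w) := by
      have h := LinearMap.ext_iff.mp hKE w
      simp only [Module.End.mul_apply, LinearMap.smul_apply] at h
      rw [h, h1, map_smul, smul_smul]
    have hK2 : K' (E w) = (q ^ 2 * A)⁻¹ • (E w) := by
      have h := LinearMap.ext_iff.mp hEK' w
      simp only [Module.End.mul_apply, LinearMap.smul_apply] at h
      rw [h2, map_smul] at h
      have h3 := congrArg (fun x => (q ^ 2)⁻¹ • x) h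
      simp only [smul_smul] at h3
      rw [inv_mul_cancel₀ hq2, one_smul] at h3
      rw [mul_inv]; exact h3.symm
    have hmain := ih (E w) (q ^ 2 * A) (mul_ne_zero hq2 hA) hK1 hK2
    have hpow : (E ^ (k + 1)) w = (E ^ k) (E w) := by
      rw [pow_succ]; rfl
    constructor
    · rw [hpow, hmain.1, show ((q ^ 2) ^ (k + 1) * A : ℂ) = (q ^ 2) ^ k * (q ^ 2 * A) by ring]
    · rw [hpow, hmain.2, show ((q ^ 2) ^ (k + 1) * A : ℂ) = (q ^ 2) ^ k * (q ^ 2 * A) by ring]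

lemma comm_one (E F K K' : Module.End ℂ M) (hqq : q - q⁻¹ ≠ 0)
    (hEF : E * F - F * E = ((q - q⁻¹)⁻¹) • (K - K'))
    (v : M) (t : ℂ) (h1 : K v = t • v) (h2 : K' v = t⁻¹ • v) :
    E (F v) = F (E v) + ((t - t⁻¹) / (q - q⁻¹)) • v := by
  have h := LinearMap.ext_iff.mp hEF v
  simp only [LinearMap.sub_apply, Module.End.mul_apply, LinearMap.smul_apply] at h
  rw [h1, h2, ← sub_smul, smul_smul] at h
  have h4 := sub_eq_iff_eq_add.mp h
  rw [h4, show (t - t⁻¹) / (q - q⁻¹) = (q - q⁻¹)⁻¹ * (t - t⁻¹) by ring]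
  exact add_comm _ _

lemma comm_pow (E F K K' : Module.End ℂ M) (hq0 : q ≠ 0)
    (hqq : q - q⁻¹ ≠ 0)
    (hKF : K * F = (q⁻¹ ^ 2) • (F * K)) (hK'F : K' * F = (q ^ 2) • (F * K'))
    (hEF : E * F - F * E = ((q - q⁻¹)⁻¹) • (K - K')) :
    ∀ (k : ℕ) (v : M) (t : ℂ), t ≠ 0 → K v = t • v → K' v = t⁻¹ • v →
      E ((F ^ (k + 1)) v) = (F ^ (k + 1)) (E v) + CC q (k + 1) t • (F ^ k) v := by
  intro k
  induction k with
  | zero =>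
    intro v t ht h1 h2
    simpa [CC_one q t hq0 hqq] using comm_one q E F K K' hqq hEF v t h1 h2
  | succ k ih =>
    intro v t ht h1 h2
    have hq2 : (q⁻¹ ^ 2 : ℂ) ≠ 0 := pow_ne_zero _ (inv_ne_zero hq0)
    have hKFv : K (F v) = (q⁻¹ ^ 2 * t) • F v := by
      have h := LinearMap.ext_iff.mp hKF v
      simp only [Module.End.mul_apply, LinearMap.smul_apply] at h
      rw [h, h1, map_smul, smul_smul]
    have hK'Fv : K' (F v) = (q⁻¹ ^ 2 * t)⁻¹ • F v := by
      have h := LinearMap.ext_iff.mp hK'F v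
      simp only [Module.End.mul_apply, LinearMap.smul_apply] at h
      rw [h, h2, map_smul, smul_smul, mul_inv, inv_pow, inv_inv, mul_comm]
    have ht' : (q⁻¹ ^ 2 * t : ℂ) ≠ 0 := mul_ne_zero hq2 ht
    have hIH := ih (F v) (q⁻¹ ^ 2 * t) ht' hKFv hK'Fv
    have hb := comm_one q E F K K' hqq hEF v t h1 h2
    have hp1 : ∀ (n : ℕ) (x : M), (F ^ (n + 1)) x = (F ^ n) (F x) := by
      intro n x; rw [pow_succ]; rfl
    rw [hp1 (k + 1) v, hIH, hb, map_add, map_smul, ← hp1 (k + 1) (E v),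
      ← hp1 k v, CC_rec q t hq0 ht hqq, add_smul, add_assoc]
    abel

end TruncAux

open TruncAux in
/-- the truncated sl₂ projector satisfies the recursion
`e p_m(s) = (q^{-h-2}[s-1]_q/[h+s-1]_q) p_{m-1}(s-1) e
  + f^m e^{m+1} (-1)^m q^{m(s-1)}/([m]_q! ∏_{i=1}^m [h+s+i]_q)`,
as operators on any weight vector (here of `h`-eigenvalue `a`; the recursion is
evaluated with the Cartan elements acting on the appropriate weight spaces)
where all Cartan denominators are invertible. -/
theorem truncated_projector_recursion (q a s : ℂ) (hq0 : q ≠ 0)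
    (hq : ∀ n : ℕ, 0 < n → q ^ n ≠ 1)
    (M : Type*) [AddCommGroup M] [Module ℂ M]
    (E F K K' : Module.End ℂ M)
    (hKK' : K * K' = 1) (hK'K : K' * K = 1)
    (hKE : K * E = (q ^ 2) • (E * K))
    (hKF : K * F = (q⁻¹ ^ 2) • (F * K))
    (hEF : E * F - F * E = ((q - q⁻¹)⁻¹) • (K - K'))
    (w : M) (hw : K w = (qpow q a) • w)
    (m : ℕ) (hm : 1 ≤ m)
    (hden : ∀ i : ℕ, 1 ≤ i → i ≤ m → qnum q (a + s + i) ≠ 0)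
    (hden' : qnum q (a + s + 1) ≠ 0) :
    E (truncProj q E F m s a w)
      = (qpow q (-a - 2) * qnum q (s - 1) / qnum q (a + s + 1)) •
          truncProj q E F (m - 1) (s - 1) (a + 2) (E w)
        + (((-1 : ℂ) ^ m * qpow q (m * (s - 1))) /
            ((∏ i ∈ Finset.Icc 1 m, qnum q i) *
             (∏ i ∈ Finset.Icc 1 m, qnum q (a + s + i)))) •
            ((F ^ m) ((E ^ (m + 1)) w)) := by
  obtain ⟨n, rfl⟩ : ∃ n, m = n + 1 := ⟨m - 1, (Nat.succ_pred_eq_of_pos hm).symm⟩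
  have hqq := sub_inv_ne_zero q hq0 hq
  have hA : qpow q a ≠ 0 := qpow_ne_zero q a
  -- K' on w
  have hK'w : K' w = (qpow q a)⁻¹ • w := by
    have h0 : (K' * K) w = w := by rw [hK'K]; rfl
    have h1 : K' (K w) = w := h0
    rw [hw, map_smul] at h1
    calc K' w = (qpow q a)⁻¹ • (qpow q a • K' w) := by
          rw [smul_smul, inv_mul_cancel₀ hA, one_smul]
      _ = (qpow q a)⁻¹ • w := by rw [h1]
  -- derived operator relations
  have hEK' : E * K' = (q ^ 2) • (K' * E) := by
    have h := congrArg (fun X => K' * X * K') hKE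
    simp only [mul_smul_comm, smul_mul_assoc] at h
    rw [← mul_assoc K' K E, hK'K, one_mul, ← mul_assoc K' E K,
      mul_assoc (K' * E) K K', hKK', mul_one] at h
    exact h
  have hK'F : K' * F = (q ^ 2) • (F * K') := by
    have h := congrArg (fun X => K' * X * K') hKF
    simp only [mul_smul_comm, smul_mul_assoc] at h
    rw [← mul_assoc K' K F, hK'K, one_mul, ← mul_assoc K' F K,
      mul_assoc (K' * F) K K', hKK', mul_one] at h
    -- h : F * K' = q⁻¹ ^ 2 • (K' * F)
    rw [h, smul_smul, show (q ^ 2 * q⁻¹ ^ 2 : ℂ) = 1 by field_simp, one_smul]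
  -- eigenvalues on E^k w
  have heig := eigen_shift q E K K' hq0 hKE hEK'
  have htne : ∀ k : ℕ, ((q ^ 2) ^ k * qpow q a : ℂ) ≠ 0 := fun k =>
    mul_ne_zero (pow_ne_zero _ (pow_ne_zero _ hq0)) hA
  -- the commutation relation applied to E^{j+1} w
  have hcomm : ∀ j : ℕ,
      E ((F ^ (j + 1)) ((E ^ (j + 1)) w))
        = (F ^ (j + 1)) (E ((E ^ (j + 1)) w))
          + CC q (j + 1) ((q ^ 2) ^ (j + 1) * qpow q a) • (F ^ j) ((E ^ (j + 1)) w) := by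
    intro j
    exact comm_pow q E F K K' hq0 hqq hKF hK'F hEF j ((E ^ (j + 1)) w)
      ((q ^ 2) ^ (j + 1) * qpow q a) (htne (j + 1))
      (heig (j + 1) w (qpow q a) hA hw hK'w).1
      (heig (j + 1) w (qpow q a) hA hw hK'w).2
  have hEpow : ∀ (k : ℕ) (x : M), (E ^ (k + 1)) x = (E ^ k) (E x) := by
    intro k x; rw [pow_succ]; rfl
  have hEpow' : ∀ (k : ℕ) (x : M), (E ^ (k + 1)) x = E ((E ^ k) x) := by
    intro k x; rw [pow_succ']; rfl
  -- abbreviations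
  set c : ℕ → ℂ := fun k => ((-1 : ℂ) ^ k * qpow q (k * (s - 1))) /
      ((∏ i ∈ Finset.Icc 1 k, qnum q i) *
       (∏ i ∈ Finset.Icc 1 k, qnum q (a + s + i))) with hc
  set c' : ℕ → ℂ := fun k => ((-1 : ℂ) ^ k * qpow q (k * ((s - 1) - 1))) /
      ((∏ i ∈ Finset.Icc 1 k, qnum q i) *
       (∏ i ∈ Finset.Icc 1 k, qnum q ((a + 2) + (s - 1) + i))) with hc'
  set lam : ℂ := qpow q (-a - 2) * qnum q (s - 1) / qnum q (a + s + 1) with hlam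
  have hL : E (truncProj q E F (n + 1) s a w)
      = ∑ k ∈ Finset.range (n + 1 + 1), c k • E ((F ^ k) ((E ^ k) w)) := by
    rw [truncProj, map_sum]
    exact Finset.sum_congr rfl fun k _ => map_smul E _ _
  have hR : truncProj q E F (n + 1 - 1) (s - 1) (a + 2) (E w)
      = ∑ k ∈ Finset.range (n + 1), c' k • (F ^ k) ((E ^ (k + 1)) w) := by
    rw [show n + 1 - 1 = n from rfl, truncProj]
    exact Finset.sum_congr rfl fun k _ => by rw [hEpow k w]
  rw [hL, hR, Finset.smul_sum]
  have hstep : ∀ j ∈ Finset.range (n + 1),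
      c (j + 1) • E ((F ^ (j + 1)) ((E ^ (j + 1)) w))
        = c (j + 1) • (F ^ (j + 1)) ((E ^ (j + 1 + 1)) w)
          + (c (j + 1) * CC q (j + 1) ((q ^ 2) ^ (j + 1) * qpow q a)) •
              (F ^ j) ((E ^ (j + 1)) w) := by
    intro j _
    rw [hcomm j, smul_add, smul_smul, ← hEpow' (j + 1) w]
  rw [Finset.sum_range_succ']
  rw [Finset.sum_congr rfl hstep, Finset.sum_add_distrib]
  -- regroup the first sum with the k = 0 term
  have hregroup :
      (∑ j ∈ Finset.range (n + 1), c (j + 1) • (F ^ (j + 1)) ((E ^ (j + 1 + 1)) w))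
        + c 0 • E ((F ^ 0) ((E ^ 0) w))
      = (∑ j ∈ Finset.range (n + 1), c j • (F ^ j) ((E ^ (j + 1)) w))
        + c (n + 1) • (F ^ (n + 1)) ((E ^ (n + 1 + 1)) w) := by
    have h0 : c 0 • E ((F ^ 0) ((E ^ 0) w)) = c 0 • (F ^ 0) ((E ^ (0 + 1)) w) := by
      simp [pow_zero, pow_one]
    rw [h0, ← Finset.sum_range_succ' (fun j => c j • (F ^ j) ((E ^ (j + 1)) w)) (n + 1),
      Finset.sum_range_succ]
  rw [add_right_comm, hregroup, add_right_comm, ← Finset.sum_add_distrib]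
  simp only [smul_smul]
  congr 1
  · refine Finset.sum_congr rfl fun j hj => ?_
    rw [← add_smul]
    congr 1
    have hjn : j + 1 ≤ n + 1 := Nat.succ_le_succ (Nat.lt_succ_iff.mp (Finset.mem_range.mp hj))
    have hgj : (∏ i ∈ Finset.Icc 1 j, qnum q (a + s + i)) ≠ 0 :=
      Finset.prod_ne_zero_iff.mpr fun i hi =>
        hden i (Finset.mem_Icc.mp hi).1
          (le_trans (Finset.mem_Icc.mp hi).2 (le_trans (Nat.lt_succ_iff.mp
            (Finset.mem_range.mp hj)) (Nat.le_succ n)))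
    have hGG : qnum q (a + s + ((j + 1 : ℕ) : ℂ)) ≠ 0 :=
      hden (j + 1) (Nat.succ_le_succ (Nat.zero_le j)) hjn
    exact scalar_key q a s j hq0 hq hgj hGG hden'
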